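/- arXiv:1604.03897 — 2 statements merged into one kernel-verified Lean document; each statement's English description precedes it below -/
import Mathlib

section
/- Duhamel's formula: if A and B are endomorphisms of a finite-dimensional complex normed vector space V, then exp(−B) − exp(−A) = −∫₀¹ exp(−sA)·(B−A)·exp(−(1−s)B) ds, where the integral is the Bochner integral in End(V); equivalently, for every s ∈ [0,1] the derivative in s of exp(−sA)·exp(−(1−s)B) equals exp(−sA)·(B−A)·exp(−(1−s)B). -/
open NormedSpace intervalIntegral
set_option synthInstance.maxHeartbeats 1000000
set_option maxHeartbeats 2000000

/-- **Duhamel's formula.** For endomorphisms `A`, `B` of a finite-dimensional complex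
normed vector space `V`, one has
`exp(−B) − exp(−A) = −∫₀¹ exp(−sA)·(B−A)·exp(−(1−s)B) ds`
(Bochner/interval integral in `End(V)`); equivalently, for every `s ∈ [0,1]` the
derivative in `s` of `exp(−sA)·exp(−(1−s)B)` is `exp(−sA)·(B−A)·exp(−(1−s)B)`. -/
theorem duhamel_formula {V : Type*} [NormedAddCommGroup V] [NormedSpace ℂ V]
    [FiniteDimensional ℂ V] (A B : V →L[ℂ] V) :
    (NormedSpace.exp (-B) - NormedSpace.exp (-A) =
      -∫ s in (0:ℝ)..1,
        NormedSpace.exp (-(s • A)) * (B - A) * NormedSpace.exp (-((1 - s) • B))) ∧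
    (∀ s ∈ Set.Icc (0:ℝ) 1,
      HasDerivAt
        (fun u : ℝ => NormedSpace.exp (-(u • A)) * NormedSpace.exp (-((1 - u) • B)))
        (NormedSpace.exp (-(s • A)) * (B - A) * NormedSpace.exp (-((1 - s) • B))) s) := by
  have hee : (exp : (V →L[ℂ] V) → (V →L[ℂ] V)) = exp := rfl
  have key : ∀ s : ℝ,
      HasDerivAt
        (fun u : ℝ => exp (-(u • A)) * exp (-((1 - u) • B)))
        (exp (-(s • A)) * (B - A) * exp (-((1 - s) • B))) s := by
    intro s
    have hA : HasDerivAt (fun u : ℝ => exp (-(u • A)))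
        (exp (-(s • A)) * (-A)) s := by
      simp only [hee, ← smul_neg]
      simpa using hasDerivAt_exp_smul_const (𝔸 := V →L[ℂ] V) (-A) s
    have hB : HasDerivAt (fun u : ℝ => exp (-((1 - u) • B)))
        (exp (-((1 - s) • B)) * B) s := by
      simp only [hee, ← smul_neg]
      have h1 : HasDerivAt (fun u : ℝ => (1 - u)) (-1) s := by
        simpa using (hasDerivAt_id s).const_sub 1
      have := (hasDerivAt_exp_smul_const (𝔸 := V →L[ℂ] V) (-B) (1 - s)).scomp s h1
      simpa [mul_neg, neg_neg, Function.comp_def] using this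
    have hprod := hA.mul hB
    have hcomm : exp (-((1 - s) • B)) * B = B * exp (-((1 - s) • B)) := by
      rw [hee]
      exact ((((Commute.refl B).smul_left (1 - s)).neg_left).exp_left).eq
    rw [hcomm] at hprod
    refine hprod.congr_deriv ?_
    noncomm_ring
  have hcont : Continuous (fun s : ℝ =>
      exp (-(s • A)) * (B - A) * exp (-((1 - s) • B))) := by
    letI : NormedAlgebra ℚ (V →L[ℂ] V) := .restrictScalars ℚ ℂ _
    exact ((exp_continuous.comp ((continuous_id.smul continuous_const).neg)).mul
      continuous_const).mul
      (exp_continuous.comp (((continuous_const.sub continuous_id).smul continuous_const).neg))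
  refine ⟨?_, fun s _ => key s⟩
  have hint := intervalIntegral.integral_eq_sub_of_hasDerivAt
    (f := fun u : ℝ => exp (-(u • A)) * exp (-((1 - u) • B)))
    (fun s _ => key s) (hcont.intervalIntegrable 0 1)
  rw [hint]
  simp [exp_zero]
end

section
/- The majorizing quadratic form q_z is positive definite: given a Q-polarized Hodge structure z of even weight w on V, for v ∈ V write v^{p,q} for the component of v in V^{p,q} and set v_z := Σ_{p > w/2} v^{p,q} and h_z(v) := 2·Q(C v_z, conj(v_z)). Then the quadratic form q_z(v) := (1/2)·Q(v,v) + h_z(v) on the real vector space V is positive definite. -/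
noncomputable section

lemma aux_eq_zero_of_sum_eq_zero {R M : Type*} [Ring R] [AddCommGroup M] [Module R M]
    {n : ℕ} {p : Fin n → Submodule R M} (h : DirectSum.IsInternal p) (f : ∀ i, p i)
    (hsum : ∑ i, (f i : M) = 0) : ∀ i, (f i : M) = 0 := by
  intro i
  set x : DirectSum (Fin n) (fun j => p j) := ∑ j, DirectSum.of (fun j => p j) j (f j) with hx
  have h1 : DirectSum.coeAddMonoidHom p x = 0 := by
    rw [hx, map_sum]
    simpa [DirectSum.coeAddMonoidHom_of] using hsum
  have h0 : x = 0 := h.injective (by rw [h1]; simp)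
  have h2 := DFunLike.congr_fun h0 i
  rw [hx] at h2
  classical
  rw [DFinsupp.finset_sum_apply] at h2
  rw [Finset.sum_eq_single i] at h2
  · rw [DirectSum.of_eq_same] at h2
    simpa using congrArg Subtype.val (h2.trans rfl : f i = 0)
  · intro j _ hji
    exact DirectSum.of_eq_of_ne _ _ _ hji.symm
  · simp


/-- Data exhibiting the complex vector space `W` as the complexification `V_ℂ` of the
real vector space `V`: a real embedding `ι`, and a complex conjugation `conj` (a
real-linear, antilinear involution) whose fixed points are exactly `ι(V)`, with
`W = ι(V) ⊕ i·ι(V)`. -/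
structure Complexification (V W : Type*) [AddCommGroup V] [Module ℝ V]
    [AddCommGroup W] [Module ℂ W] where
  ι : V →ₗ[ℝ] W
  conj : W →ₗ[ℝ] W
  conj_conj : ∀ x, conj (conj x) = x
  conj_smul : ∀ (a : ℂ) (x : W), conj (a • x) = (starRingEnd ℂ a) • conj x
  conj_ι : ∀ v, conj (ι v) = ι v
  ι_injective : Function.Injective ι
  exists_re_im : ∀ x : W, ∃ v₁ v₂ : V, x = ι v₁ + Complex.I • ι v₂
  fixed_eq_range : ∀ x : W, conj x = x → ∃ v, x = ι v

/-- A `Q`-polarized Hodge structure of weight `w` on `V`, presented as the family of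
Hodge subspaces `Vpq p = V^{p,w-p}` of the complexification `W = V_ℂ`:
`W = ⊕_{p+q=w} V^{p,q}`, conjugation maps `V^{p,q}` into `V^{q,p}`,
`Q(V^{p,q},V^{p',q'}) = 0` unless `p' = w − p`, and `i^{p−q}·Q(u, conj u) > 0` for
`0 ≠ u ∈ V^{p,q}` (here `i^{p-q} = i^p·(−i)^q`). -/
structure IsPolarizedHodgeStructure {V W : Type*} [AddCommGroup V] [Module ℝ V]
    [AddCommGroup W] [Module ℂ W] (c : Complexification V W)
    (QC : W →ₗ[ℂ] W →ₗ[ℂ] ℂ) (w : ℕ) (Vpq : ℕ → Submodule ℂ W) : Prop where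
  isInternal : DirectSum.IsInternal fun p : Fin (w + 1) => Vpq (p : ℕ)
  bot_of_gt : ∀ p, w < p → Vpq p = ⊥
  conj_mem : ∀ p, ∀ x ∈ Vpq p, c.conj x ∈ Vpq (w - p)
  isotropic : ∀ p p', p + p' ≠ w → ∀ x ∈ Vpq p, ∀ y ∈ Vpq p', QC x y = 0
  positivity : ∀ p, ∀ x ∈ Vpq p, x ≠ 0 →
    ∃ r : ℝ, 0 < r ∧ (Complex.I ^ p * (-Complex.I) ^ (w - p)) * QC x (c.conj x) = (r : ℂ)


/-- **Positive definiteness of the majorizing quadratic form `q_z`.** Given a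
`Q`-polarized Hodge structure `z` of even weight `w` on `V` with Weil operator `C`, for
`v ∈ V` with Hodge components `comp p ∈ V^{p,w-p}`, set `v_z = Σ_{p > w/2} comp p` and
`h_z(v) = 2·Q(C v_z, conj v_z)`. Then `q_z(v) = (1/2)·Q(v,v) + h_z(v)` is real and
positive for every `v ≠ 0`. -/
theorem majorant_form_positive_definite
    {V W : Type*} [AddCommGroup V] [Module ℝ V] [FiniteDimensional ℝ V]
    [AddCommGroup W] [Module ℂ W]
    (c : Complexification V W)
    (Q : LinearMap.BilinForm ℝ V) (hQsymm : ∀ u v, Q u v = Q v u)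
    (hQnd : Q.Nondegenerate)
    (QC : W →ₗ[ℂ] W →ₗ[ℂ] ℂ) (hQC : ∀ u v : V, QC (c.ι u) (c.ι v) = (Q u v : ℂ))
    (w : ℕ) (hw : 0 < w) (hweven : Even w)
    (Vpq : ℕ → Submodule ℂ W)
    (hz : IsPolarizedHodgeStructure c QC w Vpq)
    (C : W →ₗ[ℂ] W)
    (hC : ∀ p, ∀ x ∈ Vpq p, C x = (Complex.I ^ p * (-Complex.I) ^ (w - p)) • x) :
    ∀ v : V, v ≠ 0 → ∀ comp : ℕ → W,
      (∀ p, comp p ∈ Vpq p) →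
      c.ι v = ∑ p ∈ Finset.range (w + 1), comp p →
      ∃ r : ℝ,
        2 * QC (C (∑ p ∈ Finset.Ioc (w / 2) w, comp p))
            (c.conj (∑ p ∈ Finset.Ioc (w / 2) w, comp p)) = (r : ℂ) ∧
        0 < (1 / 2 : ℝ) * Q v v + r := by
  intro v hv comp hcomp hdecomp
  classical
  obtain ⟨m, hm⟩ := hweven
  have hmw : w / 2 = m := by omega
  rw [hmw]
  set E : ℕ → ℂ := fun p => Complex.I ^ p * (-Complex.I) ^ (w - p) with hE
  set s : ℕ → ℝ := fun p => (-1 : ℝ) ^ (p + m) with hs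
  -- E in terms of s
  have hEs : ∀ p ≤ w, E p = ((s p : ℝ) : ℂ) := by
    intro p hp
    have h1 : (-Complex.I) ^ (w - p) = (-1) ^ (w - p) * Complex.I ^ (w - p) := by rw [neg_pow]
    have h2 : Complex.I ^ p * Complex.I ^ (w - p) = Complex.I ^ w := by
      rw [← pow_add, Nat.add_sub_cancel' hp]
    have h3 : Complex.I ^ w = (-1 : ℂ) ^ m := by
      rw [hm, ← two_mul, pow_mul, Complex.I_sq]
    have h4 : ((-1 : ℂ)) ^ (w - p) = (-1) ^ (p + m + m) := by
      calc ((-1 : ℂ)) ^ (w - p) = (-1) ^ (w - p) * ((-1) ^ 2) ^ p := by simp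
        _ = (-1) ^ (w - p + 2 * p) := by rw [← pow_mul, ← pow_add]
        _ = (-1) ^ (p + m + m) := by rw [show w - p + 2 * p = p + m + m by omega]
    calc E p = Complex.I ^ p * (-Complex.I) ^ (w - p) := rfl
      _ = (-1 : ℂ) ^ (w - p) * (Complex.I ^ p * Complex.I ^ (w - p)) := by rw [h1]; ring
      _ = (-1 : ℂ) ^ (p + m + m) * (-1) ^ m := by rw [h2, h3, h4]
      _ = ((-1 : ℂ)) ^ (p + m) * ((-1) ^ 2) ^ m := by rw [← pow_add, ← pow_mul]; ring_nf
      _ = ((s p : ℝ) : ℂ) := by rw [hs]; push_cast; simp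
  have hs_sq : ∀ p, s p * s p = 1 := by
    intro p
    rw [hs]
    dsimp only
    rw [← pow_add, ← two_mul, pow_mul]
    norm_num
  have hs_cases : ∀ p, s p = 1 ∨ s p = -1 := by
    intro p
    rcases Nat.even_or_odd (p + m) with h | h
    · left; rw [hs]; exact h.neg_one_pow
    · right; rw [hs]; exact h.neg_one_pow
  have hs_symm : ∀ p ≤ w, s (w - p) = s p := by
    intro p hp
    rw [hs]
    dsimp only
    calc (-1 : ℝ) ^ (w - p + m) = (-1) ^ (w - p + m) * ((-1) ^ 2) ^ p := by simp
      _ = (-1) ^ (w - p + m + 2 * p) := by rw [← pow_mul, ← pow_add]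
      _ = (-1) ^ (p + m + 2 * m) := by rw [show w - p + m + 2 * p = p + m + 2 * m by omega]
      _ = (-1) ^ (p + m) * ((-1) ^ 2) ^ m := by rw [pow_add, pow_mul]
      _ = (-1) ^ (p + m) := by simp
  have hsm : s m = 1 := by
    rw [hs]
    dsimp only
    rw [← two_mul, pow_mul]
    norm_num
  -- QC symmetric
  have hQCsymm : ∀ x y : W, QC x y = QC y x := by
    intro x y
    obtain ⟨v₁, v₂, rfl⟩ := c.exists_re_im x
    obtain ⟨u₁, u₂, rfl⟩ := c.exists_re_im y
    simp only [map_add, map_smul, LinearMap.add_apply, LinearMap.smul_apply, smul_eq_mul, hQC]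
    rw [hQsymm u₁ v₁, hQsymm u₂ v₁, hQsymm u₁ v₂, hQsymm u₂ v₂]
    ring
  -- conj injective at zero
  have hconj_ne : ∀ x : W, x ≠ 0 → c.conj x ≠ 0 := by
    intro x hx h
    apply hx
    have := c.conj_conj x
    rw [h, map_zero] at this
    exact this.symm
  -- conjugates of the components
  have hconjcomp : ∀ p ≤ w, c.conj (comp p) = comp (w - p) := by
    have key : ∀ i : Fin (w + 1), c.conj (comp (w - (i : ℕ))) - comp (i : ℕ) = 0 := by
      set f : ∀ i : Fin (w + 1), (Vpq (i : ℕ) : Submodule ℂ W) := fun i =>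
        ⟨c.conj (comp (w - (i : ℕ))) - comp (i : ℕ), by
          have hle : (i : ℕ) ≤ w := Nat.lt_succ_iff.mp i.isLt
          have h1 : c.conj (comp (w - (i : ℕ))) ∈ Vpq (w - (w - (i : ℕ))) :=
            hz.conj_mem _ _ (hcomp _)
          rw [Nat.sub_sub_self hle] at h1
          exact sub_mem h1 (hcomp _)⟩ with hf
      have hsum : ∑ i, (f i : W) = 0 := by
        have e1 : ∑ i : Fin (w + 1), (f i : W)
            = (∑ i : Fin (w + 1), c.conj (comp (w - (i : ℕ))))
              - ∑ i : Fin (w + 1), comp (i : ℕ) := by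
          rw [← Finset.sum_sub_distrib]
        have e2 : ∑ i : Fin (w + 1), c.conj (comp (w - (i : ℕ)))
            = c.conj (∑ p ∈ Finset.range (w + 1), comp p) := by
          rw [map_sum, Fin.sum_univ_eq_sum_range (fun k => c.conj (comp (w - k))) (w + 1)]
          have := Finset.sum_range_reflect (fun p => c.conj (comp p)) (w + 1)
          simpa using this
        have e3 : ∑ i : Fin (w + 1), comp (i : ℕ) = ∑ p ∈ Finset.range (w + 1), comp p :=
          Fin.sum_univ_eq_sum_range (fun p => comp p) (w + 1)
        rw [e1, e2, e3, ← hdecomp, c.conj_ι, sub_self]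
      intro i
      have := aux_eq_zero_of_sum_eq_zero hz.isInternal f hsum i
      simpa [hf] using this
    intro p hp
    have := key ⟨w - p, by omega⟩
    simp only [Nat.sub_sub_self hp] at this
    exact sub_eq_zero.mp this
  -- the positive coefficients a p
  have keya : ∀ p : ℕ, ∃ r : ℝ, 0 ≤ r ∧ E p * QC (comp p) (c.conj (comp p)) = (r : ℂ) ∧
      (comp p ≠ 0 → 0 < r) := by
    intro p
    by_cases h : comp p = 0
    · exact ⟨0, le_rfl, by simp [h], fun hc => absurd h hc⟩
    · obtain ⟨r, hr, hre⟩ := hz.positivity p (comp p) (hcomp p) h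
      exact ⟨r, hr.le, hre, fun _ => hr⟩
  choose a ha0 ha1 ha2 using keya
  have hQval : ∀ p ≤ w, QC (comp p) (c.conj (comp p)) = ((s p * a p : ℝ) : ℂ) := by
    intro p hp
    have h1 := ha1 p
    rw [hEs p hp] at h1
    calc QC (comp p) (c.conj (comp p))
        = ((s p * s p : ℝ) : ℂ) * QC (comp p) (c.conj (comp p)) := by rw [hs_sq]; simp
      _ = ((s p : ℝ) : ℂ) * (((s p : ℝ) : ℂ) * QC (comp p) (c.conj (comp p))) := by
          push_cast; ring
      _ = ((s p : ℝ) : ℂ) * ((a p : ℝ) : ℂ) := by rw [h1]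
      _ = ((s p * a p : ℝ) : ℂ) := by push_cast; ring
  have hsne : ∀ p, s p ≠ 0 := by
    intro p h
    have := hs_sq p
    rw [h] at this
    norm_num at this
  have hasymm : ∀ p ≤ w, a (w - p) = a p := by
    intro p hp
    have e1 := hQval (w - p) (by omega)
    rw [hs_symm p hp] at e1
    have e2 : QC (comp (w - p)) (c.conj (comp (w - p))) = QC (comp p) (c.conj (comp p)) := by
      rw [← hconjcomp p hp, c.conj_conj]
      exact hQCsymm _ _
    have e3 := hQval p hp
    have e4 : (s p * a (w - p) : ℝ) = (s p * a p : ℝ) := by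
      have := e1.symm.trans (e2.trans e3)
      exact_mod_cast this
    exact mul_left_cancel₀ (hsne p) e4
  -- value of Q v v
  have hQvvC : (Q v v : ℂ) = ∑ p ∈ Finset.range (w + 1), ((s p * a p : ℝ) : ℂ) := by
    have e0 : (Q v v : ℂ) = QC (c.ι v) (c.ι v) := (hQC v v).symm
    rw [e0, hdecomp, map_sum QC comp (Finset.range (w + 1)), LinearMap.coe_sum, Finset.sum_apply]
    refine Finset.sum_congr rfl fun p hp => ?_
    have hpw : p ≤ w := by
      rw [Finset.mem_range] at hp; omega
    rw [map_sum]
    rw [Finset.sum_eq_single_of_mem (w - p) (by rw [Finset.mem_range]; omega)]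
    · rw [← hconjcomp p hpw]
      exact hQval p hpw
    · intro p' hp' hne
      rw [Finset.mem_range] at hp'
      exact hz.isotropic p p' (by omega) _ (hcomp p) _ (hcomp p')
  have hQvv : Q v v = ∑ p ∈ Finset.range (w + 1), s p * a p := by
    have : (Q v v : ℂ) = ((∑ p ∈ Finset.range (w + 1), s p * a p : ℝ) : ℂ) := by
      rw [hQvvC]; push_cast; ring
    exact_mod_cast this
  -- value of the majorant term
  have hIocw : ∀ p ∈ Finset.Ioc m w, p ≤ w := fun p hp => (Finset.mem_Ioc.mp hp).2
  have hH : QC (C (∑ p ∈ Finset.Ioc m w, comp p)) (c.conj (∑ p ∈ Finset.Ioc m w, comp p))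
      = ((∑ p ∈ Finset.Ioc m w, a p : ℝ) : ℂ) := by
    have hCL : C (∑ p ∈ Finset.Ioc m w, comp p) = ∑ p ∈ Finset.Ioc m w, E p • comp p := by
      rw [map_sum]
      exact Finset.sum_congr rfl fun p _ => hC p _ (hcomp p)
    have hconjL : c.conj (∑ p ∈ Finset.Ioc m w, comp p)
        = ∑ p ∈ Finset.Ioc m w, comp (w - p) := by
      rw [map_sum]
      exact Finset.sum_congr rfl fun p hp => hconjcomp p (hIocw p hp)
    rw [hCL, hconjL, map_sum QC (fun p => E p • comp p) (Finset.Ioc m w), LinearMap.coe_sum,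
      Finset.sum_apply]
    rw [show ((∑ p ∈ Finset.Ioc m w, a p : ℝ) : ℂ) = ∑ p ∈ Finset.Ioc m w, ((a p : ℝ) : ℂ) by
      push_cast; ring]
    refine Finset.sum_congr rfl fun p hp => ?_
    rw [map_sum]
    rw [Finset.sum_eq_single_of_mem p hp]
    · rw [LinearMap.map_smul, LinearMap.smul_apply, smul_eq_mul, ← hconjcomp p (hIocw p hp)]
      exact ha1 p
    · intro p' hp' hne
      rw [LinearMap.map_smul, LinearMap.smul_apply, smul_eq_mul]
      have h0 : QC (comp p) (comp (w - p')) = 0 := by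
        have h1 := hIocw p hp
        have h2 := hIocw p' hp'
        exact hz.isotropic p (w - p') (by omega) _ (hcomp p) _ (hcomp _)
      rw [h0, mul_zero]
  -- splitting the sum
  have hIoc_eq : Finset.Ioc m w = Finset.Ico (m + 1) (w + 1) := by
    ext p
    simp only [Finset.mem_Ioc, Finset.mem_Ico]
    omega
  have hsplit : ∑ p ∈ Finset.range (w + 1), s p * a p
      = s m * a m + 2 * ∑ p ∈ Finset.Ioc m w, s p * a p := by
    have h1 : (∑ p ∈ Finset.Ico 0 (m + 1), s p * a p)
        + ∑ p ∈ Finset.Ico (m + 1) (w + 1), s p * a p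
        = ∑ p ∈ Finset.Ico 0 (w + 1), s p * a p :=
      Finset.sum_Ico_consecutive _ (by omega) (by omega)
    have h2 : Finset.range (w + 1) = Finset.Ico 0 (w + 1) := by
      rw [Finset.range_eq_Ico]
    have h3 : Finset.Ico 0 (m + 1) = Finset.range (m + 1) := by
      rw [Finset.range_eq_Ico]
    have h4 : ∑ p ∈ Finset.range (m + 1), s p * a p
        = (∑ p ∈ Finset.range m, s p * a p) + s m * a m := Finset.sum_range_succ _ m
    have h5 : ∑ p ∈ Finset.range m, s p * a p = ∑ p ∈ Finset.Ioc m w, s p * a p := by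
      refine Finset.sum_nbij' (fun p => w - p) (fun p => w - p) ?_ ?_ ?_ ?_ ?_ <;>
        intro p hp <;>
        simp only [Finset.mem_range, Finset.mem_Ioc] at hp ⊢
      · omega
      · omega
      · omega
      · omega
      · rw [hs_symm p (by omega), hasymm p (by omega)]
    rw [h2, ← h1, h3, h4, ← hIoc_eq, h5]
    ring
  -- positivity source
  have hexists : 0 < a m ∨ ∃ q ∈ Finset.Ioc m w, 0 < a q := by
    have hne : ∃ p ∈ Finset.range (w + 1), comp p ≠ 0 := by
      by_contra h
      push_neg at h
      have : c.ι v = 0 := by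
        rw [hdecomp]
        exact Finset.sum_eq_zero h
      exact hv (c.ι_injective (by rw [this, map_zero]))
    obtain ⟨p₀, hp₀mem, hp₀⟩ := hne
    rw [Finset.mem_range] at hp₀mem
    rcases lt_trichotomy p₀ m with h | h | h
    · right
      refine ⟨w - p₀, by rw [Finset.mem_Ioc]; omega, ha2 _ ?_⟩
      rw [← hconjcomp p₀ (by omega)]
      exact hconj_ne _ hp₀
    · left
      rw [← h]
      exact ha2 _ hp₀
    · right
      exact ⟨p₀, by rw [Finset.mem_Ioc]; omega, ha2 _ hp₀⟩
  -- endgame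
  refine ⟨2 * ∑ p ∈ Finset.Ioc m w, a p, ?_, ?_⟩
  · rw [hH]; push_cast; ring
  · rw [hQvv, hsplit, hsm]
    have hterm : ∀ p ∈ Finset.Ioc m w, a p ≤ s p * a p + 2 * a p := by
      intro p _
      rcases hs_cases p with h | h <;> rw [h] <;> nlinarith [ha0 p]
    have hsum_ge : ∑ p ∈ Finset.Ioc m w, a p
        ≤ ∑ p ∈ Finset.Ioc m w, (s p * a p + 2 * a p) := Finset.sum_le_sum hterm
    have hdist : ∑ p ∈ Finset.Ioc m w, (s p * a p + 2 * a p)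
        = (∑ p ∈ Finset.Ioc m w, s p * a p) + 2 * ∑ p ∈ Finset.Ioc m w, a p := by
      rw [Finset.sum_add_distrib, Finset.mul_sum]
    have hS0 : 0 ≤ ∑ p ∈ Finset.Ioc m w, a p := Finset.sum_nonneg fun p _ => ha0 p
    have hkey : 0 < (1 / 2 : ℝ) * a m + ∑ p ∈ Finset.Ioc m w, a p := by
      rcases hexists with h | ⟨q, hq, hqpos⟩
      · have := hS0
        linarith
      · have hpos : 0 < ∑ p ∈ Finset.Ioc m w, a p :=
          Finset.sum_pos' (fun p _ => ha0 p) ⟨q, hq, hqpos⟩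
        have := ha0 m
        linarith
    linarith [hsum_ge, hdist]
end
end
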